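/- arXiv:1801.01384 — 9 statements merged into one kernel-verified Lean document; each statement's English description precedes it below -/
import Mathlib

section
/- Let (L,·,\,/) be a loop with A(L)-holomorph (H,∘). Then (H,∘) is a middle Bol loop if and only if (xδ)·((y·(zδ))\x) = ((x/z)δ)·(y\x) for all x,y,z∈L and all δ∈A(L). -/
/-- A loop `(L, ·, \, /)` with identity `e`: `mul` is the multiplication,
`ld` the left division (`ld x y = x \ y`), `rd` the right division (`rd x y = x / y`). -/
structure LoopStr (α : Type*) where
  mul : α → α → α
  ld : α → α → α
  rd : α → α → α
  e : α
  mul_ld : ∀ x y, mul x (ld x y) = y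
  rd_mul : ∀ x y, mul (rd y x) x = y
  ld_mul : ∀ x y, ld x (mul x y) = y
  mul_rd : ∀ x y, rd (mul y x) x = y
  e_mul : ∀ x, mul e x = x
  mul_e : ∀ x, mul x e = x

namespace LoopStr

variable {α : Type*}

/-- The middle Bol identity `x(yz \ x) = (x/z)(y \ x)`. -/
def IsMiddleBol (Q : LoopStr α) : Prop :=
  ∀ x y z, Q.mul x (Q.ld (Q.mul y z) x) = Q.mul (Q.rd x z) (Q.ld y x)

/-- The subgroup `A` of permutations of `L` consists of automorphisms of `(L,·)`,
i.e. `A ≤ AUT(L,·)`. -/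
def IsAutSubgroup (Q : LoopStr α) (A : Subgroup (Equiv.Perm α)) : Prop :=
  ∀ θ ∈ A, ∀ x y, θ (Q.mul x y) = Q.mul (θ x) (θ y)

/-- Holomorph multiplication `(α,x)∘(β,y) = (αβ, xβ·y)`.  Maps are written on the
right and composed left to right, so `αβ` ("first `α`, then `β`") is `β * α`
in Mathlib's convention, and `xβ` is `β x`. -/
def hmul (Q : LoopStr α) (A : Subgroup (Equiv.Perm α)) (p q : A × α) : A × α :=
  (q.1 * p.1, Q.mul ((q.1 : Equiv.Perm α) p.2) q.2)

end LoopStr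

/-- Let `(L,·,\,/)` be a loop with `A(L)`-holomorph `(H,∘)`.  Then `(H,∘)`
is a middle Bol loop if and only if
`(xδ)·((y·(zδ))\x) = ((x/z)δ)·(y\x)` for all `x,y,z ∈ L` and all `δ ∈ A(L)`.
(The holomorph is a loop; we quantify over the (unique) loop structure `H` whose
multiplication is the holomorph multiplication.) -/
theorem holomorph_middleBol_iff {α : Type*} (Q : LoopStr α) (A : Subgroup (Equiv.Perm α))
    (hA : Q.IsAutSubgroup A) :
    ∀ H : LoopStr (A × α), (∀ p q, H.mul p q = Q.hmul A p q) →
      (H.IsMiddleBol ↔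
        ∀ δ ∈ A, ∀ x y z : α,
          Q.mul (δ x) (Q.ld (Q.mul y (δ z)) x) = Q.mul (δ (Q.rd x z)) (Q.ld y x)) := by

  intro H hm
  -- uniqueness of divisions
  have ldeq : ∀ {β : Type _} (R : LoopStr β) (x y z : β), R.mul x z = y → R.ld x y = z := by
    intro β R x y z h; rw [← h, R.ld_mul]
  have rdeq : ∀ {β : Type _} (R : LoopStr β) (x y z : β), R.mul z x = y → R.rd y x = z := by
    intro β R x y z h; rw [← h, R.mul_rd]
  -- closed formula for H.ld
  have hld : ∀ p q : A × α, H.ld p q =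
      (q.1 * p.1⁻¹, Q.ld (((q.1 * p.1⁻¹ : A) : Equiv.Perm α) p.2) q.2) := by
    intro p q
    apply ldeq
    rw [hm]
    simp [LoopStr.hmul, Prod.ext_iff, Q.mul_ld]
  -- closed formula for H.rd
  have hrd : ∀ p q : A × α, H.rd q p =
      (p.1⁻¹ * q.1, ((p.1⁻¹ : A) : Equiv.Perm α) (Q.rd q.2 p.2)) := by
    intro p q
    apply rdeq
    rw [hm]
    simp [LoopStr.hmul, Prod.ext_iff, Q.rd_mul]
  constructor
  · intro hB δ hδ x y z
    have key := hB (⟨δ, hδ⟩, x) (1, δ⁻¹ y) (1, z)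
    simp only [hm, LoopStr.hmul, hld, hrd, Prod.ext_iff] at key
    obtain ⟨-, key⟩ := key
    simp only [mul_one, one_mul, inv_one, mul_inv_cancel_right, Subgroup.coe_mul,
      Subgroup.coe_inv, OneMemClass.coe_one, Equiv.Perm.mul_apply, Equiv.Perm.one_apply,
      (fun (f : Equiv.Perm α) x => f.apply_symm_apply x : ∀ (f : Equiv.Perm α) x, f (f⁻¹ x) = x),
        (fun (f : Equiv.Perm α) x => f.symm_apply_apply x : ∀ (f : Equiv.Perm α) x, f⁻¹ (f x) = x)] at key
    rw [hA δ hδ] at key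
    simpa using key
  · intro h X Y Z
    obtain ⟨a, u⟩ := X; obtain ⟨b, v⟩ := Y; obtain ⟨c, w⟩ := Z
    simp only [hm, LoopStr.hmul, hld, hrd, Prod.ext_iff]
    constructor
    · group
    · have key := h ((a * (c * b)⁻¹ : A) : Equiv.Perm α) (a * (c * b)⁻¹ : A).2 u
        (((a * b⁻¹ : A) : Equiv.Perm α) v) w
      rw [hA ((a * (c * b)⁻¹ : A) : Equiv.Perm α) (a * (c * b)⁻¹ : A).2]
      simp only [Subgroup.coe_mul, Subgroup.coe_inv, mul_inv_rev, Equiv.Perm.mul_apply,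
        (fun (f : Equiv.Perm α) x => f.apply_symm_apply x : ∀ (f : Equiv.Perm α) x, f (f⁻¹ x) = x),
        (fun (f : Equiv.Perm α) x => f.symm_apply_apply x : ∀ (f : Equiv.Perm α) x, f⁻¹ (f x) = x)] at key ⊢
      simpa using key
end

section
/- Let (L,·,\,/) be a loop with A(L)-holomorph (H,∘). Then (H,∘) is a middle Bol loop if and only if for every x∈L and every δ∈A(L), the triple ⟨δ⁻¹𝕃ₓδ, ℛₓ, ℛₓL_{xδ}⟩ is an anti-autotopism of (L,·); elementwise, if and only if ((x/(zδ⁻¹))δ)·(y\x) = (xδ)·((y·z)\x) for all x,y,z∈L and δ∈A(L). -/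
/-- An anti-autotopism of `(L,·)`: a triple `⟨U,V,W⟩` of bijections of `L` such that
`xU · yV = (y·x)W` for all `x,y ∈ L`. -/
def LoopStr.IsAntiATP {α : Type*} (Q : LoopStr α) (U V W : α → α) : Prop :=
  Function.Bijective U ∧ Function.Bijective V ∧ Function.Bijective W ∧
    ∀ x y, Q.mul (U x) (V y) = W (Q.mul y x)

namespace LoopStr

variable {α : Type*} (Q : LoopStr α)

lemma ld_eq_of' {x s y : α} (h : Q.mul x s = y) : Q.ld x y = s := by
  rw [← h, Q.ld_mul]

lemma rd_eq_of' {x s y : α} (h : Q.mul s x = y) : Q.rd y x = s := by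
  rw [← h, Q.mul_rd]

lemma bij_ldx' (x : α) : Function.Bijective (fun y => Q.ld y x) :=
  Function.bijective_iff_has_inverse.mpr
    ⟨fun z => Q.rd x z, fun y => Q.rd_eq_of' (Q.mul_ld y x),
      fun z => Q.ld_eq_of' (Q.rd_mul z x)⟩

lemma bij_rdx' (x : α) : Function.Bijective (fun z => Q.rd x z) :=
  Function.bijective_iff_has_inverse.mpr
    ⟨fun y => Q.ld y x, fun z => Q.ld_eq_of' (Q.rd_mul z x),
      fun y => Q.rd_eq_of' (Q.mul_ld y x)⟩

lemma bij_mulL' (x : α) : Function.Bijective (Q.mul x) :=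
  Function.bijective_iff_has_inverse.mpr ⟨Q.ld x, Q.ld_mul x, Q.mul_ld x⟩

lemma aux_core' (A : Subgroup (Equiv.Perm α)) (hA : Q.IsAutSubgroup A)
    (H : LoopStr (A × α)) (hm : ∀ p q, H.mul p q = Q.hmul A p q) :
    H.IsMiddleBol ↔
      ∀ δ ∈ A, ∀ x y z : α,
        Q.mul (δ (Q.rd x (δ⁻¹ z))) (Q.ld y x) = Q.mul (δ x) (Q.ld (Q.mul y z) x) := by
  have haut : ∀ (d : A) (u v : α),
      (d : Equiv.Perm α) (Q.mul u v) = Q.mul ((d : Equiv.Perm α) u) ((d : Equiv.Perm α) v) :=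
    fun d => hA d d.2
  have hld : ∀ (a b : A) (x y : α),
      H.ld (a, x) (b, y) = (b * a⁻¹, Q.ld (((b * a⁻¹ : A) : Equiv.Perm α) x) y) := by
    intro a b x y
    have h : H.mul (a, x) (b * a⁻¹, Q.ld (((b * a⁻¹ : A) : Equiv.Perm α) x) y) = (b, y) := by
      rw [hm]
      unfold LoopStr.hmul
      simp [Q.mul_ld]
    rw [← h, H.ld_mul]
  have hrd : ∀ (a b : A) (x y : α),
      H.rd (b, y) (a, x) = (a⁻¹ * b, ((a⁻¹ : A) : Equiv.Perm α) (Q.rd y x)) := by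
    intro a b x y
    have h : H.mul (a⁻¹ * b, ((a⁻¹ : A) : Equiv.Perm α) (Q.rd y x)) (a, x) = (b, y) := by
      rw [hm]
      unfold LoopStr.hmul
      simp [Q.rd_mul]
    rw [← h, H.mul_rd]
  constructor
  · intro h δ hδ x y z
    set d : A := ⟨δ, hδ⟩ with hd
    have key := h (1, x) (1, y) (d⁻¹, δ⁻¹ z)
    simp only [hm, LoopStr.hmul, hld, hrd] at key
    simp only [mul_one, one_mul, inv_inv, inv_one, InvMemClass.coe_inv, OneMemClass.coe_one,
      Equiv.Perm.one_apply, Prod.mk.injEq] at key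
    have e : δ (Q.mul (δ⁻¹ y) (δ⁻¹ z)) = Q.mul y z := by
      have := haut d (δ⁻¹ y) (δ⁻¹ z)
      simpa [hd] using this
    rw [e] at key
    exact key.2.symm
  · intro h p q r
    obtain ⟨a, x⟩ := p
    obtain ⟨b, y⟩ := q
    obtain ⟨c, z⟩ := r
    simp only [hm, LoopStr.hmul, hld, hrd]
    have capp : ∀ (u v : A) (s : α),
        ((u * v : A) : Equiv.Perm α) s = (u : Equiv.Perm α) ((v : Equiv.Perm α) s) :=
      fun u v s => rfl
    refine Prod.ext ?_ ?_
    · show a * (c * b)⁻¹ * a = a * b⁻¹ * (c⁻¹ * a)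
      group
    · show Q.mul (((a * (c * b)⁻¹ : A) : Equiv.Perm α) x)
          (Q.ld (((a * (c * b)⁻¹ : A) : Equiv.Perm α) (Q.mul ((c : Equiv.Perm α) y) z)) x)
        = Q.mul (((a * b⁻¹ : A) : Equiv.Perm α) (((c⁻¹ : A) : Equiv.Perm α) (Q.rd x z)))
          (Q.ld (((a * b⁻¹ : A) : Equiv.Perm α) y) x)
      have key := h ((a * (c * b)⁻¹ : A) : Equiv.Perm α) (a * (c * b)⁻¹ : A).2 x
        (((a * b⁻¹ : A) : Equiv.Perm α) y) (((a * (c * b)⁻¹ : A) : Equiv.Perm α) z)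
      rw [show ∀ (f : Equiv.Perm α) (w : α), f⁻¹ (f w) = w from fun f w => f.symm_apply_apply w] at key
      have e1 : ((a * (c * b)⁻¹ : A) : Equiv.Perm α) (Q.mul ((c : Equiv.Perm α) y) z)
          = Q.mul (((a * b⁻¹ : A) : Equiv.Perm α) y)
              (((a * (c * b)⁻¹ : A) : Equiv.Perm α) z) := by
        rw [haut, ← capp]
        have e : (a * (c * b)⁻¹) * c = a * b⁻¹ := by group
        rw [e]
      rw [← e1] at key
      have e2 : ((a * b⁻¹ : A) : Equiv.Perm α) (((c⁻¹ : A) : Equiv.Perm α) (Q.rd x z))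
          = ((a * (c * b)⁻¹ : A) : Equiv.Perm α) (Q.rd x z) := by
        rw [← capp]
        have e : (a * b⁻¹) * c⁻¹ = a * (c * b)⁻¹ := by group
        rw [e]
      rw [e2]
      exact key.symm

end LoopStr

/-- Let `(L,·,\,/)` be a loop with `A(L)`-holomorph `(H,∘)`.  Then `(H,∘)`
is a middle Bol loop if and only if for every `x ∈ L` and every `δ ∈ A(L)` the triple
`⟨δ⁻¹𝕃ₓδ, ℛₓ, ℛₓL_{xδ}⟩` is an anti-autotopism of `(L,·)` (maps written on the right,
composed left to right: `z(δ⁻¹𝕃ₓδ) = (x/(zδ⁻¹))δ`, `yℛₓ = y\x`, `z(ℛₓL_{xδ}) = (xδ)·(z\x)`);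
elementwise, if and only if `((x/(zδ⁻¹))δ)·(y\x) = (xδ)·((y·z)\x)` for all `x,y,z ∈ L`
and `δ ∈ A(L)`. -/
theorem holomorph_middleBol_iff_antiAutotopism {α : Type*} (Q : LoopStr α)
    (A : Subgroup (Equiv.Perm α)) (hA : Q.IsAutSubgroup A) :
    ∀ H : LoopStr (A × α), (∀ p q, H.mul p q = Q.hmul A p q) →
      ((H.IsMiddleBol ↔
          ∀ x : α, ∀ δ ∈ A,
            Q.IsAntiATP (fun z => δ (Q.rd x (δ⁻¹ z))) (fun y => Q.ld y x)
              (fun z => Q.mul (δ x) (Q.ld z x))) ∧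
        (H.IsMiddleBol ↔
          ∀ δ ∈ A, ∀ x y z : α,
            Q.mul (δ (Q.rd x (δ⁻¹ z))) (Q.ld y x) = Q.mul (δ x) (Q.ld (Q.mul y z) x))) := by
  intro H hm
  have key := Q.aux_core' A hA H hm
  refine ⟨?_, key⟩
  constructor
  · intro hmb x δ hδ
    refine ⟨?_, Q.bij_ldx' x, ?_, fun z y => key.mp hmb δ hδ x y z⟩
    · exact δ.bijective.comp ((Q.bij_rdx' x).comp δ⁻¹.bijective)
    · exact (Q.bij_mulL' (δ x)).comp (Q.bij_ldx' x)
  · intro h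
    apply key.mpr
    intro δ hδ x y z
    exact (h x δ hδ).2.2.2 z y
end

section
/- Let (L,·,\,/) be a loop with A(L)-holomorph (H,∘). Then (H,∘) is a commutative loop if and only if A(L) is an abelian group and, for all α,β∈A(L), the triple ⟨β,α⁻¹,I⟩ is an anti-autotopism of (L,·), i.e., (xβ)·(yα⁻¹) = y·x for all x,y∈L. -/
/-- Let `(L,·,\,/)` be a loop with `A(L)`-holomorph `(H,∘)`.  Then `(H,∘)`
is a commutative loop if and only if `A(L)` is an abelian group and, for all
`α,β ∈ A(L)`, the triple `⟨β, α⁻¹, I⟩` is an anti-autotopism of `(L,·)`, i.e.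
`(xβ)·(yα⁻¹) = y·x` for all `x,y ∈ L`. -/
theorem holomorph_commutative_iff {α : Type*} (Q : LoopStr α)
    (A : Subgroup (Equiv.Perm α)) (hA : Q.IsAutSubgroup A) :
    (∀ p q : A × α, Q.hmul A p q = Q.hmul A q p) ↔
      ((∀ a ∈ A, ∀ b ∈ A, a * b = b * a) ∧
        ∀ a ∈ A, ∀ b ∈ A,
          Q.IsAntiATP (fun x => b x) (fun y => a⁻¹ y) id) := by
  constructor
  · intro h
    constructor
    · intro a ha b hb
      have := congrArg Prod.fst (h (⟨a, ha⟩, Q.e) (⟨b, hb⟩, Q.e))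
      simpa [LoopStr.hmul, Subtype.ext_iff] using this.symm
    · intro a ha b hb
      refine ⟨b.bijective, (a⁻¹).bijective, Function.bijective_id, ?_⟩
      intro x y
      have := congrArg Prod.snd (h (⟨a, ha⟩, x) (⟨b, hb⟩, a⁻¹ y))
      simpa [LoopStr.hmul] using this
  · rintro ⟨hcomm, hatp⟩ ⟨⟨a, ha⟩, x⟩ ⟨⟨b, hb⟩, y⟩
    obtain ⟨_, _, _, hq⟩ := hatp a ha b hb
    simp only [LoopStr.hmul, Prod.mk.injEq, Subtype.ext_iff]
    refine ⟨hcomm b hb a ha, ?_⟩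
    have := hq x (a y)
    simpa using this
end

section
/- Let (L,·,\,/) be a commutative loop with A(L)-holomorph (H,∘). Then (H,∘) is a commutative loop if and only if A(L) is an abelian group and, for all α,β∈A(L), the triple (β,α⁻¹,I) is an autotopism of (L,·), i.e., (xβ)·(yα⁻¹) = x·y for all x,y∈L. -/
/-- An autotopism of `(L,·)`: a triple `(U,V,W)` of bijections of `L` such that
`xU · yV = (x·y)W` for all `x,y ∈ L`. -/
def LoopStr.IsATP {α : Type*} (Q : LoopStr α) (U V W : α → α) : Prop :=
  Function.Bijective U ∧ Function.Bijective V ∧ Function.Bijective W ∧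
    ∀ x y, Q.mul (U x) (V y) = W (Q.mul x y)

/-- Let `(L,·,\,/)` be a commutative loop with `A(L)`-holomorph `(H,∘)`.
Then `(H,∘)` is a commutative loop if and only if `A(L)` is an abelian group and, for
all `α,β ∈ A(L)`, the triple `(β, α⁻¹, I)` is an autotopism of `(L,·)`, i.e.
`(xβ)·(yα⁻¹) = x·y` for all `x,y ∈ L`. -/
theorem holomorph_of_comm_commutative_iff {α : Type*} (Q : LoopStr α)
    (hcomm : ∀ x y, Q.mul x y = Q.mul y x)
    (A : Subgroup (Equiv.Perm α)) (hA : Q.IsAutSubgroup A) :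
    (∀ p q : A × α, Q.hmul A p q = Q.hmul A q p) ↔
      ((∀ a ∈ A, ∀ b ∈ A, a * b = b * a) ∧
        ∀ a ∈ A, ∀ b ∈ A,
          Q.IsATP (fun x => b x) (fun y => a⁻¹ y) id) := by
  constructor
  · intro h
    constructor
    · intro a ha b hb
      have := congrArg Prod.fst (h (⟨a, ha⟩, Q.e) (⟨b, hb⟩, Q.e))
      simpa [LoopStr.hmul] using congrArg Subtype.val this.symm
    · intro a ha b hb
      refine ⟨b.bijective, (a⁻¹).bijective, Function.bijective_id, ?_⟩
      intro x y
      have := congrArg Prod.snd (h (⟨a, ha⟩, x) (⟨b, hb⟩, a⁻¹ y))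
      simp only [LoopStr.hmul] at this
      simpa [Equiv.apply_symm_apply] using this.trans (hcomm _ _)
  · rintro ⟨hab, hatp⟩
    rintro ⟨⟨a, ha⟩, x⟩ ⟨⟨b, hb⟩, y⟩
    have h2 := (hatp a ha b hb).2.2.2 x (a y)
    simp only [Equiv.Perm.coe_inv, Equiv.symm_apply_apply, id] at h2
    refine Prod.ext ?_ ?_
    · exact Subtype.ext (hab b hb a ha)
    · simpa [LoopStr.hmul] using h2.trans (hcomm _ _)
end

section
/- Let (L,·,\,/) be a commutative loop with A(L)-holomorph (H,∘). Then (H,∘) is a commutative loop if and only if A(L) is an abelian group and, for each pair (α,β)∈A(L)², the map β is μ-regular with adjoint β′ = α (so β∈Φ(L,·) and α∈Ψ(L,·)). -/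
/-- `U` is a μ-regular bijection of `(L,·)` with adjoint `U'`:
`(U, U'⁻¹, I)` is an autotopism, i.e. `xU · y(U')⁻¹ = x·y` for all `x,y`. -/
def LoopStr.MuRegAdj {α : Type*} (Q : LoopStr α) (U U' : Equiv.Perm α) : Prop :=
  ∀ x y, Q.mul (U x) (U'⁻¹ y) = Q.mul x y

/-- Let `(L,·,\,/)` be a commutative loop with `A(L)`-holomorph `(H,∘)`.
Then `(H,∘)` is a commutative loop if and only if `A(L)` is an abelian group and, for
each pair `(α,β) ∈ A(L)²`, the map `β` is μ-regular with adjoint `β′ = α`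
(so `β ∈ Φ(L,·)` and `α ∈ Ψ(L,·)`). -/
theorem holomorph_of_comm_commutative_iff_muRegular {α : Type*} (Q : LoopStr α)
    (hcomm : ∀ x y, Q.mul x y = Q.mul y x)
    (A : Subgroup (Equiv.Perm α)) (hA : Q.IsAutSubgroup A) :
    (∀ p q : A × α, Q.hmul A p q = Q.hmul A q p) ↔
      ((∀ a ∈ A, ∀ b ∈ A, a * b = b * a) ∧
        ∀ a ∈ A, ∀ b ∈ A, Q.MuRegAdj b a) := by
  constructor
  · intro h
    constructor
    · intro a ha b hb
      have := congrArg Prod.fst (h (⟨a, ha⟩, Q.e) (⟨b, hb⟩, Q.e))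
      simpa [LoopStr.hmul, Subtype.ext_iff, eq_comm] using this
    · intro a ha b hb x y
      have := congrArg Prod.snd (h (⟨a, ha⟩, x) (⟨b, hb⟩, a⁻¹ y))
      simp [LoopStr.hmul] at this
      exact this.trans (hcomm y x)
  · rintro ⟨hc, hm⟩ p q
    refine Prod.ext ?_ ?_
    · exact Subtype.ext (hc q.1 q.1.2 p.1 p.1.2)
    · have := hm p.1 p.1.2 q.1 q.1.2 p.2 ((p.1 : Equiv.Perm α) q.2)
      simp [LoopStr.hmul]
      rw [show ((p.1 : Equiv.Perm α)⁻¹) ((p.1 : Equiv.Perm α) q.2) = q.2 from (p.1 : Equiv.Perm α).symm_apply_apply _] at this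
      rw [this, hcomm]
end

section
/- Let (Q,·,\,/) be a right Bol loop with identity e, x∗y = (y·(x·y⁻¹))·y where y⁻¹ := y\e, A(Q) ≤ AUT(Q,·), (H,⊙) the A(Q)-holomorph of (Q,·) and (H,⊛) the A(Q)-holomorph of (Q,∗). Let (ℋ,(∗,·)) be the right combined holomorph. Then (ℋ,(∗,·)) = (H,⊛) (i.e., (α,x)(∗,·)(β,y) = (α,x)⊛(β,y) for all α,β∈A(Q), x,y∈Q) if and only if αβ = βα for all α,β∈A(Q) and, for all α,β∈A(Q) and all x,y∈Q, β = R_y⁻¹L_{yα}L_y⁻¹R_y, i.e., y·((xβ)/y) = (yα)·(x/y). -/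
/-- Right Bol identity `((x·y)·z)·y = x·((y·z)·y)`. -/
def LoopStr.IsRightBol {α : Type*} (Q : LoopStr α) : Prop :=
  ∀ x y z, Q.mul (Q.mul (Q.mul x y) z) y = Q.mul x (Q.mul (Q.mul y z) y)

/-- The operation `x∗y = (y·(x·y⁻¹))·y` (with `y⁻¹ := y\e`) corresponding to a
right Bol loop `(Q,·)`; `(Q,∗)` is its corresponding middle Bol loop. -/
def LoopStr.starR {α : Type*} (Q : LoopStr α) (x y : α) : α :=
  Q.mul (Q.mul y (Q.mul x (Q.ld y Q.e))) y

/-- The `A(Q)`-holomorph multiplication `(α,x)⊛(β,y) = (αβ, (xβ)∗y)` of `(Q,∗)`. -/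
def LoopStr.hstarR {α : Type*} (Q : LoopStr α) (A : Subgroup (Equiv.Perm α))
    (p q : A × α) : A × α :=
  (q.1 * p.1, Q.starR ((q.1 : Equiv.Perm α) p.2) q.2)

/-- The inverse in the holomorph `(H,⊙)` of a right Bol loop:
`(β,y)⁻¹ = (β⁻¹, (y⁻¹)β⁻¹)` with `y⁻¹ := y\e`. -/
def LoopStr.hinvR {α : Type*} (Q : LoopStr α) (A : Subgroup (Equiv.Perm α))
    (p : A × α) : A × α :=
  (p.1⁻¹, ((p.1 : Equiv.Perm α))⁻¹ (Q.ld p.2 Q.e))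

/-- The right combined holomorph operation
`(α,x)(∗,·)(β,y) = ((β,y)⊙((α,x)⊙(β,y)⁻¹))⊙(β,y)`. -/
def LoopStr.rightComb {α : Type*} (Q : LoopStr α) (A : Subgroup (Equiv.Perm α))
    (p q : A × α) : A × α :=
  Q.hmul A (Q.hmul A q (Q.hmul A p (Q.hinvR A q))) q

namespace LoopStr

variable {α : Type*} (Q : LoopStr α)

theorem rcancel {a b y : α} (h : Q.mul a y = Q.mul b y) : a = b := by
  have h2 := congrArg (fun z => Q.rd z y) h
  simpa [Q.mul_rd] using h2

theorem rip (hRB : Q.IsRightBol) (x y : α) :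
    Q.mul (Q.mul x y) (Q.ld y Q.e) = x := by
  have h := hRB x y (Q.ld y Q.e)
  rw [Q.mul_ld, Q.e_mul] at h
  exact Q.rcancel h

theorem inv_mul_cancel' (hRB : Q.IsRightBol) (x y : α) :
    Q.mul (Q.mul x (Q.ld y Q.e)) y = x := by
  have hx : Q.mul (Q.rd x y) y = x := Q.rd_mul y x
  calc Q.mul (Q.mul x (Q.ld y Q.e)) y
      = Q.mul (Q.mul (Q.mul (Q.rd x y) y) (Q.ld y Q.e)) y := by rw [hx]
    _ = Q.mul (Q.rd x y) y := by rw [Q.rip hRB]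
    _ = x := hx

theorem rd_eq (hRB : Q.IsRightBol) (x y : α) :
    Q.rd x y = Q.mul x (Q.ld y Q.e) := by
  have h := Q.mul_rd y (Q.mul x (Q.ld y Q.e))
  rwa [Q.inv_mul_cancel' hRB] at h

theorem comb_key {A : Subgroup (Equiv.Perm α)} (hA : Q.IsAutSubgroup A)
    (a b : A) (x y : α) :
    Q.rightComb A (a, x) (b, y) =
      (a * b, Q.mul (Q.mul ((a : Equiv.Perm α) y)
        (Q.mul x (Q.ld y Q.e))) y) := by
  refine Prod.ext ?_ ?_
  · simp only [rightComb, hmul, hinvR]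
    group
  · simp only [rightComb, hmul, hinvR, Subgroup.coe_mul, Subgroup.coe_inv,
      Equiv.Perm.mul_apply, hA (b : Equiv.Perm α) b.2, Equiv.Perm.coe_inv, Equiv.apply_symm_apply]

end LoopStr

/-- Let `(Q,·,\,/)` be a right Bol loop, `x∗y = (y·(x·y⁻¹))·y` with
`y⁻¹ := y\e`, `A(Q) ≤ AUT(Q,·)`, `(H,⊙)` the `A(Q)`-holomorph of `(Q,·)`, `(H,⊛)` the
`A(Q)`-holomorph of `(Q,∗)` and `(ℋ,(∗,·))` the right combined holomorph.  Then
`(ℋ,(∗,·)) = (H,⊛)` if and only if `αβ = βα` for all `α,β ∈ A(Q)` and, for all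
`α,β ∈ A(Q)` and all `x,y ∈ Q`, `β = R_y⁻¹L_{yα}L_y⁻¹R_y`, i.e.
`y·((xβ)/y) = (yα)·(x/y)`. -/
theorem rightCombinedHolomorph_eq_iff {α : Type*} (Q : LoopStr α)
    (hRB : Q.IsRightBol)
    (A : Subgroup (Equiv.Perm α)) (hA : Q.IsAutSubgroup A) :
    (∀ p q : A × α, Q.rightComb A p q = Q.hstarR A p q) ↔
      ((∀ a ∈ A, ∀ b ∈ A, a * b = b * a) ∧
        ∀ a ∈ A, ∀ b ∈ A, ∀ x y : α,
          Q.mul y (Q.rd (b x) y) = Q.mul (a y) (Q.rd x y)) := by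
  constructor
  · intro h
    constructor
    · intro a ha b hb
      have h1 := congrArg Prod.fst (h (⟨a, ha⟩, Q.e) (⟨b, hb⟩, Q.e))
      rw [Q.comb_key hA] at h1
      simp only [LoopStr.hstarR] at h1
      have : (⟨a, ha⟩ * ⟨b, hb⟩ : A) = ⟨b, hb⟩ * ⟨a, ha⟩ := h1
      exact Subtype.ext_iff.mp this
    · intro a ha b hb x y
      have h1 := congrArg Prod.snd (h (⟨a, ha⟩, x) (⟨b, hb⟩, y))
      rw [Q.comb_key hA] at h1
      simp only [LoopStr.hstarR, LoopStr.starR] at h1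
      have h2 : Q.mul ((a : Equiv.Perm α) y) (Q.mul x (Q.ld y Q.e)) =
          Q.mul y (Q.mul (b x) (Q.ld y Q.e)) := Q.rcancel h1
      rw [Q.rd_eq hRB, Q.rd_eq hRB]
      exact h2.symm
  · rintro ⟨hc, h2⟩ ⟨⟨a, ha⟩, x⟩ ⟨⟨b, hb⟩, y⟩
    rw [Q.comb_key hA]
    simp only [LoopStr.hstarR, LoopStr.starR, Prod.mk.injEq]
    constructor
    · exact Subtype.ext (hc a ha b hb)
    · have h3 := h2 a ha b hb x y
      rw [Q.rd_eq hRB, Q.rd_eq hRB] at h3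
      rw [h3]
end

section
/- Let (Q,·,\,/) be a left Bol loop with identity e, let x∗y = y·((y⁻¹·x)·y) where y⁻¹ := e/y, and let A(Q) ≤ AUT(Q,·). Let (H,⊙) be the A(Q)-holomorph of (Q,·), i.e., (α,x)⊙(β,y) = (αβ, xβ·y), and let (H,⊛) be the A(Q)-holomorph of (Q,∗), i.e., (α,x)⊛(β,y) = (αβ, (xβ)∗y). Then the operations ⊙ and ⊛ coincide (i.e., (α,x)⊙(β,y) = (α,x)⊛(β,y) for all α,β∈A(Q), x,y∈Q) if and only if (Q,·) is flexible, i.e., (y·a)·y = y·(a·y) for all a,y∈Q. -/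
/-- Left Bol identity `(x·(y·x))·z = x·(y·(x·z))`. -/
def LoopStr.IsLeftBol {α : Type*} (Q : LoopStr α) : Prop :=
  ∀ x y z, Q.mul (Q.mul x (Q.mul y x)) z = Q.mul x (Q.mul y (Q.mul x z))

/-- The operation `x∗y = y·((y⁻¹·x)·y)` (with `y⁻¹ := e/y`) corresponding to a
left Bol loop `(Q,·)`; `(Q,∗)` is its corresponding middle Bol loop. -/
def LoopStr.starL {α : Type*} (Q : LoopStr α) (x y : α) : α :=
  Q.mul y (Q.mul (Q.mul (Q.rd Q.e y) x) y)

/-- The `A(Q)`-holomorph multiplication `(α,x)⊛(β,y) = (αβ, (xβ)∗y)` of `(Q,∗)`. -/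
def LoopStr.hstarL {α : Type*} (Q : LoopStr α) (A : Subgroup (Equiv.Perm α))
    (p q : A × α) : A × α :=
  (q.1 * p.1, Q.starL ((q.1 : Equiv.Perm α) p.2) q.2)

/-- Let `(Q,·,\,/)` be a left Bol loop, `x∗y = y·((y⁻¹·x)·y)` with
`y⁻¹ := e/y`, and `A(Q) ≤ AUT(Q,·)`.  Let `(H,⊙)` be the `A(Q)`-holomorph of `(Q,·)`
and `(H,⊛)` the `A(Q)`-holomorph of `(Q,∗)`.  Then `⊙` and `⊛` coincide if and only if
`(Q,·)` is flexible, i.e. `(y·a)·y = y·(a·y)` for all `a,y ∈ Q`. -/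
theorem leftBol_holomorphs_coincide_iff_flexible {α : Type*} (Q : LoopStr α)
    (hLB : Q.IsLeftBol)
    (A : Subgroup (Equiv.Perm α)) (hA : Q.IsAutSubgroup A) :
    (∀ p q : A × α, Q.hmul A p q = Q.hstarL A p q) ↔
      (∀ a y, Q.mul (Q.mul y a) y = Q.mul y (Q.mul a y)) := by
  -- Left inverse property: y⁻¹·(y·z) = z, with y⁻¹ := e/y.
  have LIP : ∀ y z, Q.mul (Q.rd Q.e y) (Q.mul y z) = z := by
    intro y z
    have h := hLB y (Q.rd Q.e y) z
    rw [Q.rd_mul, Q.mul_e] at h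
    have := Q.ld_mul y z
    calc Q.mul (Q.rd Q.e y) (Q.mul y z)
        = Q.ld y (Q.mul y (Q.mul (Q.rd Q.e y) (Q.mul y z))) := (Q.ld_mul _ _).symm
      _ = Q.ld y (Q.mul y z) := by rw [← h]
      _ = z := Q.ld_mul _ _
  -- y·y⁻¹ = e
  have RI : ∀ y, Q.mul y (Q.rd Q.e y) = Q.e := by
    intro y
    have h1 : Q.mul (Q.rd Q.e y) (Q.mul y (Q.rd Q.e y)) = Q.rd Q.e y := LIP y _
    have h2 : Q.ld (Q.rd Q.e y) (Q.mul (Q.rd Q.e y) (Q.mul y (Q.rd Q.e y)))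
        = Q.mul y (Q.rd Q.e y) := Q.ld_mul _ _
    rw [h1] at h2
    have h3 : Q.ld (Q.rd Q.e y) (Q.rd Q.e y)
        = Q.ld (Q.rd Q.e y) (Q.mul (Q.rd Q.e y) Q.e) := by rw [Q.mul_e]
    rw [Q.ld_mul] at h3
    rw [← h2, h3]
  -- (y⁻¹)⁻¹ = y
  have II : ∀ y, Q.rd Q.e (Q.rd Q.e y) = y := by
    intro y
    have := Q.mul_rd (Q.rd Q.e y) y
    rw [RI y] at this
    exact this
  -- y·(y⁻¹·x) = x
  have LIP' : ∀ y x, Q.mul y (Q.mul (Q.rd Q.e y) x) = x := by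
    intro y x
    have := LIP (Q.rd Q.e y) x
    rwa [II y] at this
  constructor
  · intro h a y
    have key := h (1, Q.mul y a) (1, y)
    simp only [LoopStr.hmul, LoopStr.hstarL, Prod.mk.injEq] at key
    have key2 := key.2
    simp only [OneMemClass.coe_one, Equiv.Perm.coe_one, id_eq] at key2
    rw [key2]
    unfold LoopStr.starL
    rw [LIP y a]
  · intro hf p q
    unfold LoopStr.hmul LoopStr.hstarL LoopStr.starL
    refine Prod.ext rfl ?_
    simp only
    rw [← hf, LIP']
end

section
/- Let (Q,·,\,/) be a left Bol loop with identity e, x∗y = y·((y⁻¹·x)·y) where y⁻¹ := e/y, A(Q) ≤ AUT(Q,·), (H,⊙) the A(Q)-holomorph of (Q,·) and (H,⊛) the A(Q)-holomorph of (Q,∗). Let (ℋ,[∗,·]) be the left combined holomorph. Then (ℋ,[∗,·]) = (H,⊛) (i.e., (α,x)[∗,·](β,y) = (α,x)⊛(β,y) for all α,β∈A(Q), x,y∈Q) if and only if L_y⁻¹R_yL_y = L_{yφ}⁻¹R_yL_{yφ} for all y∈Q and all φ∈A(Q), i.e., y·((y\a)·y) = (yφ)·(((yφ)\a)·y) for all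 a,y∈Q and φ∈A(Q). -/
/-- The inverse in the holomorph `(H,⊙)` of a left Bol loop:
`(β,y)⁻¹ = (β⁻¹, (y⁻¹)β⁻¹)` with `y⁻¹ := e/y`. -/
def LoopStr.hinvL {α : Type*} (Q : LoopStr α) (A : Subgroup (Equiv.Perm α))
    (p : A × α) : A × α :=
  (p.1⁻¹, ((p.1 : Equiv.Perm α))⁻¹ (Q.rd Q.e p.2))

/-- The left combined holomorph operation
`(α,x)[∗,·](β,y) = (β,y)⊙(((β,y)⁻¹⊙(α,x))⊙(β,y))`. -/
def LoopStr.leftComb {α : Type*} (Q : LoopStr α) (A : Subgroup (Equiv.Perm α))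
    (p q : A × α) : A × α :=
  Q.hmul A q (Q.hmul A (Q.hmul A (Q.hinvL A q) p) q)

namespace LoopStr

variable {α : Type*} (Q : LoopStr α)

lemma ld_self' (x : α) : Q.ld x x = Q.e := by
  have h := Q.ld_mul x Q.e
  rwa [Q.mul_e] at h

lemma lip' (hLB : Q.IsLeftBol) (x z : α) :
    Q.mul (Q.rd Q.e x) (Q.mul x z) = z := by
  have h := hLB x (Q.rd Q.e x) z
  rw [Q.rd_mul, Q.mul_e] at h
  have h2 := congrArg (Q.ld x) h
  rw [Q.ld_mul, Q.ld_mul] at h2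
  exact h2.symm

lemma ld_eq' (hLB : Q.IsLeftBol) (x z : α) :
    Q.ld x z = Q.mul (Q.rd Q.e x) z := by
  have h := Q.lip' hLB x (Q.ld x z)
  rw [Q.mul_ld] at h
  exact h.symm

lemma aut_e' {A : Subgroup (Equiv.Perm α)} (hA : Q.IsAutSubgroup A)
    {θ : Equiv.Perm α} (hθ : θ ∈ A) : θ Q.e = Q.e := by
  have h := hA θ hθ Q.e Q.e
  rw [Q.mul_e] at h
  have h2 := congrArg (Q.ld (θ Q.e)) h
  rw [Q.ld_mul, Q.ld_self'] at h2
  exact h2.symm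

lemma aut_rd_e' {A : Subgroup (Equiv.Perm α)} (hA : Q.IsAutSubgroup A)
    {θ : Equiv.Perm α} (hθ : θ ∈ A) (y : α) :
    θ (Q.rd Q.e y) = Q.rd Q.e (θ y) := by
  have h := hA θ hθ (Q.rd Q.e y) y
  rw [Q.rd_mul, Q.aut_e' hA hθ] at h
  have h2 := Q.mul_rd (θ y) (θ (Q.rd Q.e y))
  rw [← h] at h2
  exact h2.symm

end LoopStr

/-- Let `(Q,·,\,/)` be a left Bol loop, `x∗y = y·((y⁻¹·x)·y)` with
`y⁻¹ := e/y`, `A(Q) ≤ AUT(Q,·)`, `(H,⊙)` the `A(Q)`-holomorph of `(Q,·)`, `(H,⊛)` the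
`A(Q)`-holomorph of `(Q,∗)` and `(ℋ,[∗,·])` the left combined holomorph.  Then
`(ℋ,[∗,·]) = (H,⊛)` if and only if `L_y⁻¹R_yL_y = L_{yφ}⁻¹R_yL_{yφ}` for all `y ∈ Q`
and `φ ∈ A(Q)`, i.e. `y·((y\a)·y) = (yφ)·(((yφ)\a)·y)` for all `a,y ∈ Q` and
`φ ∈ A(Q)`. -/
theorem leftCombinedHolomorph_eq_iff {α : Type*} (Q : LoopStr α)
    (hLB : Q.IsLeftBol)
    (A : Subgroup (Equiv.Perm α)) (hA : Q.IsAutSubgroup A) :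
    (∀ p q : A × α, Q.leftComb A p q = Q.hstarL A p q) ↔
      (∀ φ ∈ A, ∀ a y : α,
        Q.mul y (Q.mul (Q.ld y a) y) = Q.mul (φ y) (Q.mul (Q.ld (φ y) a) y)) := by
  constructor
  · intro h φ hφ a y
    have key := congrArg Prod.snd
      (h ((⟨φ, hφ⟩ : A), a) ((1 : A), y))
    simp only [LoopStr.leftComb, LoopStr.hmul, LoopStr.hinvL, LoopStr.hstarL,
      LoopStr.starL, OneMemClass.coe_one, inv_one, Equiv.Perm.coe_one, id_eq,
      Subgroup.coe_mul, Equiv.Perm.coe_mul, Function.comp_apply, one_mul,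
      mul_one] at key
    rw [Q.aut_rd_e' hA hφ] at key
    rw [Q.ld_eq' hLB, Q.ld_eq' hLB]
    exact key.symm
  · intro h p q
    obtain ⟨β, y⟩ := q
    obtain ⟨α', x⟩ := p
    simp only [LoopStr.leftComb, LoopStr.hmul, LoopStr.hinvL, LoopStr.hstarL,
      LoopStr.starL]
    rw [Prod.mk.injEq]
    constructor
    · group
    · set θ : A := β * (α' * β⁻¹) with hθdef
      have hmem : (θ : Equiv.Perm α) ∈ A := θ.2
      have h1 : (β : Equiv.Perm α) (Q.mul ((α' : Equiv.Perm α)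
          (((β : Equiv.Perm α))⁻¹ (Q.rd Q.e y))) x)
          = Q.mul ((θ : Equiv.Perm α) (Q.rd Q.e y)) ((β : Equiv.Perm α) x) := by
        rw [hA β β.2]
        simp [hθdef, Equiv.Perm.mul_apply]
      rw [h1, Q.aut_rd_e' hA hmem]
      have h2 := h (θ : Equiv.Perm α) hmem ((β : Equiv.Perm α) x) y
      rw [Q.ld_eq' hLB, Q.ld_eq' hLB] at h2
      simp only [hθdef] at h2 ⊢
      exact h2.symm
end

section
/- Let (Q,·,\,/) be a left Bol loop with identity e and define x∘y = y·((y⁻¹·x)·y), where y⁻¹ := e/y. Then (Q,∘) is a middle Bol loop: it is a loop with identity e and it satisfies the middle Bol identity x∘((y∘z)\'x) = (x/'z)∘(y\'x) for all x,y,z∈Q, where \' and /' denote the left and right divisions of (Q,∘). -/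
section Aux

private lemma lbol_lemA {α : Type*} (Q : LoopStr α) (hLB : Q.IsLeftBol) : ∀ x w, Q.mul x (Q.mul (Q.rd Q.e x) w) = w := by
  intro x w
  have h := hLB x (Q.rd Q.e x) (Q.ld x w)
  rw [Q.rd_mul, Q.mul_e] at h
  rw [Q.mul_ld] at h
  exact h.symm

private lemma lbol_lemB {α : Type*} (Q : LoopStr α) (hLB : Q.IsLeftBol) : ∀ x w, Q.mul (Q.rd Q.e x) (Q.mul x w) = w := by
  intro x w
  have h := congrArg (Q.ld x) (lbol_lemA Q hLB x (Q.mul x w))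
  rwa [Q.ld_mul, Q.ld_mul] at h

private lemma lbol_mul_inv {α : Type*} (Q : LoopStr α) (hLB : Q.IsLeftBol) : ∀ x, Q.mul x (Q.rd Q.e x) = Q.e := by
  intro x
  have h := lbol_lemA Q hLB x Q.e
  rwa [Q.mul_e] at h

private lemma lbol_inv_inv {α : Type*} (Q : LoopStr α) (hLB : Q.IsLeftBol) : ∀ x, Q.rd Q.e (Q.rd Q.e x) = x := by
  intro x
  have h := Q.mul_rd (Q.rd Q.e x) x
  rwa [lbol_mul_inv Q hLB] at h

private lemma lbol_key {α : Type*} (Q : LoopStr α) (hLB : Q.IsLeftBol) : ∀ x y,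
    Q.mul y (Q.mul (Q.mul (Q.rd Q.e y) x) y) = Q.rd x (Q.rd Q.e y) := by
  intro x y
  have h := hLB y (Q.mul (Q.rd Q.e y) x) (Q.rd Q.e y)
  rw [lbol_mul_inv Q hLB, Q.mul_e, lbol_lemA Q hLB] at h
  have h3 := Q.mul_rd (Q.rd Q.e y) (Q.mul y (Q.mul (Q.mul (Q.rd Q.e y) x) y))
  rw [h] at h3
  exact h3.symm

private lemma lbol_rdEq {α : Type*} (Q : LoopStr α) (hLB : Q.IsLeftBol) : ∀ x d,
    Q.rd x d = Q.mul x (Q.mul (Q.rd Q.e (Q.mul x d)) x) := by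
  intro x d
  have h := hLB x (Q.rd Q.e (Q.mul x d)) d
  rw [Q.rd_mul, Q.mul_e] at h
  have h2 := Q.mul_rd d (Q.mul x (Q.mul (Q.rd Q.e (Q.mul x d)) x))
  rw [h] at h2
  exact h2

private lemma lbol_lemD {α : Type*} (Q : LoopStr α) (hLB : Q.IsLeftBol) : ∀ x d z, Q.mul (Q.rd x d) z
    = Q.mul x (Q.mul (Q.rd Q.e (Q.mul x d)) (Q.mul x z)) := by
  intro x d z
  rw [lbol_rdEq Q hLB x d]
  exact hLB x (Q.rd Q.e (Q.mul x d)) z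

private lemma lbol_mbolQ {α : Type*} (Q : LoopStr α) (hLB : Q.IsLeftBol) : ∀ x y z,
    Q.rd x (Q.ld x (Q.rd y (Q.rd Q.e z)))
      = Q.rd (Q.mul x (Q.rd Q.e z)) (Q.ld x y) := by
  intro x y z
  set d := Q.ld x (Q.rd y (Q.rd Q.e z)) with hd
  have hxd : Q.mul x d = Q.rd y (Q.rd Q.e z) := Q.mul_ld _ _
  have h1 := lbol_lemD Q hLB x d (Q.ld x y)
  rw [Q.mul_ld] at h1
  rw [Q.mul_ld] at h1
  have hy : Q.mul (Q.rd y (Q.rd Q.e z)) (Q.rd Q.e z) = y := Q.rd_mul (Q.rd Q.e z) y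
  have h2 := lbol_lemB Q hLB (Q.rd y (Q.rd Q.e z)) (Q.rd Q.e z)
  rw [hy] at h2
  rw [h2] at h1
  have h3 := Q.mul_rd (Q.ld x y) (Q.rd x d)
  rw [h1] at h3
  exact h3.symm

end Aux

/-- Let `(Q,·,\,/)` be a left Bol loop with identity `e` and define
`x∘y = y·((y⁻¹·x)·y)` where `y⁻¹ := e/y`.  Then `(Q,∘)` is a middle Bol loop: it is a
loop with identity `e` (i.e. there is a loop structure `P` with multiplication `∘` and
identity `e`) and it satisfies the middle Bol identity with respect to its own
divisions. -/
theorem leftBol_star_isMiddleBol {α : Type*} (Q : LoopStr α) (hLB : Q.IsLeftBol) :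
    ∃ P : LoopStr α,
      (∀ x y, P.mul x y = Q.mul y (Q.mul (Q.mul (Q.rd Q.e y) x) y)) ∧
      P.e = Q.e ∧ P.IsMiddleBol := by
  refine ⟨⟨fun x y => Q.rd x (Q.rd Q.e y),
    fun x b => Q.rd Q.e (Q.ld b x),
    fun b y => Q.mul b (Q.rd Q.e y), Q.e, ?_, ?_, ?_, ?_, ?_, ?_⟩, ?_, rfl, ?_⟩
  · -- mul_ld
    intro x y
    rw [lbol_inv_inv Q hLB]
    have h := Q.mul_rd (Q.ld y x) y
    rw [Q.mul_ld] at h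
    exact h
  · -- rd_mul
    intro x y
    exact Q.mul_rd (Q.rd Q.e x) y
  · -- ld_mul
    intro x y
    have h := Q.rd_mul (Q.rd Q.e y) x
    have h2 := congrArg (Q.ld (Q.rd x (Q.rd Q.e y))) h.symm
    rw [Q.ld_mul] at h2
    rw [h2]
    exact lbol_inv_inv Q hLB y
  · -- mul_rd
    intro x y
    exact Q.rd_mul (Q.rd Q.e x) y
  · -- e_mul
    intro x
    exact lbol_inv_inv Q hLB x
  · -- mul_e
    intro x
    have he : Q.rd Q.e Q.e = Q.e := by
      have h := Q.mul_rd Q.e Q.e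
      rwa [Q.mul_e] at h
    rw [he]
    have h := Q.rd_mul Q.e x
    rw [Q.mul_e] at h
    exact h
  · -- formula
    intro x y
    exact (lbol_key Q hLB x y).symm
  · -- middle Bol
    intro x y z
    dsimp only
    rw [lbol_inv_inv Q hLB, lbol_inv_inv Q hLB]
    exact lbol_mbolQ Q hLB x y z
end
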